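/- Suppose (Θ̂₁,…,Θ̂_T) is a tuple of positive definite p×p real matrices that minimizes the adaptive GFlsL objective G_a over all tuples of positive definite p×p real matrices. With the additional convention ξ_{2,T+1} := 0, for all integers s, t with 1 ≤ s < t ≤ T+1 one has ‖(1/T)·∑_{r=s}^{t−1} (Θ̂_r − X_r X_rᵀ)‖_F ≤ λ₂·(ξ_{2s} + ξ_{2t}) + λ₁·√(p(p−1))·(t−s)·max_{s ≤ r ≤ t−1} max_{u≠v} ξ_{uv,1r}. -/

import Mathlib

open Matrix Finset

noncomputable def frob {p : ℕ} (A : Matrix (Fin p) (Fin p) ℝ) : ℝ :=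
  Real.sqrt (∑ u, ∑ v, (A u v) ^ 2)

noncomputable def gflslA (p T : ℕ) (X : ℕ → Fin p → ℝ) (lam1 lam2 : ℝ)
    (ξ1 : Fin p → Fin p → ℕ → ℝ) (ξ2 : ℕ → ℝ)
    (Θ : ℕ → Matrix (Fin p) (Fin p) ℝ) : ℝ :=
  (1 / (2 * (T : ℝ))) *
      ∑ t ∈ Finset.Icc 1 T,
        ((Θ t)ᵀ * Θ t - (Matrix.vecMulVec (X t) (X t))ᵀ * Θ t
          - (Θ t)ᵀ * Matrix.vecMulVec (X t) (X t)).trace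
    + lam1 * ∑ t ∈ Finset.Icc 1 T, ∑ u, ∑ v,
        (if u ≠ v then ξ1 u v t * |Θ t u v| else 0)
    + lam2 * ∑ t ∈ Finset.Icc 2 T, ξ2 t * frob (Θ t - Θ (t - 1))

noncomputable def toE {p : ℕ} (A : Matrix (Fin p) (Fin p) ℝ) :
    EuclideanSpace ℝ (Fin p × Fin p) := WithLp.toLp 2 (fun q : Fin p × Fin p => A q.1 q.2)

lemma frob_eq_norm {p : ℕ} (A : Matrix (Fin p) (Fin p) ℝ) : frob A = ‖toE A‖ := by
  rw [EuclideanSpace.norm_eq, frob]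
  congr 1
  rw [Fintype.sum_prod_type]
  simp [toE, Real.norm_eq_abs, sq_abs]

lemma frob_nonneg {p : ℕ} (A : Matrix (Fin p) (Fin p) ℝ) : 0 ≤ frob A :=
  Real.sqrt_nonneg _

lemma frob_sq {p : ℕ} (A : Matrix (Fin p) (Fin p) ℝ) :
    frob A ^ 2 = ∑ u, ∑ v, (A u v) ^ 2 := by
  rw [frob, Real.sq_sqrt]; positivity

lemma frob_smul {p : ℕ} (c : ℝ) (A : Matrix (Fin p) (Fin p) ℝ) :
    frob (c • A) = |c| * frob A := by
  rw [frob, frob]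
  have : ∀ u v : Fin p, ((c • A) u v) ^ 2 = c ^ 2 * (A u v) ^ 2 := by
    intro u v; simp [Matrix.smul_apply]; ring
  simp_rw [this, ← Finset.mul_sum]
  rw [Real.sqrt_mul (sq_nonneg c), Real.sqrt_sq_eq_abs]

lemma frob_eq_zero_iff {p : ℕ} (A : Matrix (Fin p) (Fin p) ℝ) :
    frob A = 0 ↔ A = 0 := by
  constructor
  · intro h
    have h2 : ∑ u, ∑ v, (A u v) ^ 2 = 0 := by rw [← frob_sq, h]; norm_num
    ext u v
    have hu : ∀ u ∈ Finset.univ, (0:ℝ) ≤ ∑ v, (A u v)^2 := fun u _ => by positivity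
    have := (Finset.sum_eq_zero_iff_of_nonneg hu).1 h2 u (Finset.mem_univ u)
    have hv : ∀ v ∈ Finset.univ, (0:ℝ) ≤ (A u v)^2 := fun v _ => sq_nonneg _
    have := (Finset.sum_eq_zero_iff_of_nonneg hv).1 this v (Finset.mem_univ v)
    simpa using pow_eq_zero_iff (n := 2) (by norm_num) |>.1 this
  · intro h; simp [h, frob]

lemma toE_sub {p : ℕ} (A B : Matrix (Fin p) (Fin p) ℝ) : toE (A - B) = toE A - toE B := by
  rw [toE, toE, toE, ← WithLp.toLp_sub]; rfl
lemma toE_add {p : ℕ} (A B : Matrix (Fin p) (Fin p) ℝ) : toE (A + B) = toE A + toE B := by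
  rw [toE, toE, toE, ← WithLp.toLp_add]; rfl

lemma frob_sub_le {p : ℕ} (A B C : Matrix (Fin p) (Fin p) ℝ) :
    frob (A - B) ≤ frob (A - C) + frob (C - B) := by
  rw [frob_eq_norm, frob_eq_norm, frob_eq_norm, toE_sub, toE_sub, toE_sub]
  exact norm_sub_le_norm_sub_add_norm_sub _ _ _

lemma quad_eq_sum {p : ℕ} (A : Matrix (Fin p) (Fin p) ℝ) (x : Fin p → ℝ) :
    x ⬝ᵥ A *ᵥ x = ∑ u, ∑ v, A u v * x u * x v := by
  simp [dotProduct, Matrix.mulVec, Finset.mul_sum]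
  exact Finset.sum_congr rfl fun u _ => Finset.sum_congr rfl fun v _ => by ring

lemma abs_quad_le {p : ℕ} (M : Matrix (Fin p) (Fin p) ℝ) (x : Fin p → ℝ) :
    |x ⬝ᵥ M *ᵥ x| ≤ frob M * ∑ i, x i ^ 2 := by
  rw [quad_eq_sum]
  calc |∑ u, ∑ v, M u v * x u * x v| ≤ ∑ u, ∑ v, |M u v * x u * x v| := by
        refine (Finset.abs_sum_le_sum_abs _ _).trans ?_
        exact Finset.sum_le_sum fun u _ => Finset.abs_sum_le_sum_abs _ _
    _ = ∑ q : Fin p × Fin p, |M q.1 q.2| * |x q.1 * x q.2| := by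
        rw [Fintype.sum_prod_type]
        simp [abs_mul, mul_assoc]
    _ ≤ Real.sqrt (∑ q : Fin p × Fin p, |M q.1 q.2| ^ 2) *
          Real.sqrt (∑ q : Fin p × Fin p, |x q.1 * x q.2| ^ 2) := by
        have h := sum_mul_sq_le_sq_mul_sq Finset.univ
          (fun q : Fin p × Fin p => |M q.1 q.2|) (fun q => |x q.1 * x q.2|)
        have hL : (0:ℝ) ≤ ∑ q : Fin p × Fin p, |M q.1 q.2| * |x q.1 * x q.2| := by positivity
        calc ∑ q : Fin p × Fin p, |M q.1 q.2| * |x q.1 * x q.2|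
            = Real.sqrt ((∑ q : Fin p × Fin p, |M q.1 q.2| * |x q.1 * x q.2|) ^ 2) := by
              rw [Real.sqrt_sq hL]
          _ ≤ _ := by
              rw [← Real.sqrt_mul (by positivity)]
              exact Real.sqrt_le_sqrt h
    _ = frob M * ∑ i, x i ^ 2 := by
        congr 1
        · rw [frob, Fintype.sum_prod_type]; simp [sq_abs]
        · rw [show (∑ q : Fin p × Fin p, |x q.1 * x q.2| ^ 2)
              = (∑ i, x i ^ 2) * (∑ i, x i ^ 2) by
            rw [Finset.sum_mul_sum, Fintype.sum_prod_type]
            simp [abs_mul, mul_pow, sq_abs]]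
          exact Real.sqrt_mul_self (by positivity)

lemma posdef_quad_lower {p : ℕ} (hp : 1 ≤ p) (A : Matrix (Fin p) (Fin p) ℝ)
    (hA : A.PosDef) : ∃ c > 0, ∀ x : Fin p → ℝ, c * (∑ i, x i ^ 2) ≤ x ⬝ᵥ A *ᵥ x := by
  classical
  set E := EuclideanSpace ℝ (Fin p)
  have hne : Nonempty (Fin p) := ⟨⟨0, hp⟩⟩
  have hcont : Continuous (fun x : E => (x : Fin p → ℝ) ⬝ᵥ A *ᵥ (x : Fin p → ℝ)) := by
    simp_rw [quad_eq_sum]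
    refine continuous_finset_sum _ fun u _ => continuous_finset_sum _ fun v _ => ?_
    exact (continuous_const.mul ((EuclideanSpace.proj u : E →L[ℝ] ℝ).continuous)).mul
      ((EuclideanSpace.proj v : E →L[ℝ] ℝ).continuous)
  have hsne : (Metric.sphere (0:E) 1).Nonempty := by
    refine NormedSpace.sphere_nonempty.mpr zero_le_one
  obtain ⟨x₀, hx₀mem, hx₀min⟩ := (isCompact_sphere (0:E) 1).exists_isMinOn hsne
    hcont.continuousOn
  have hx₀norm : ‖x₀‖ = 1 := by simpa using hx₀mem
  have hx₀ne : (x₀ : Fin p → ℝ) ≠ 0 := by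
    intro h
    have : x₀ = 0 := by ext i; exact congrFun h i
    rw [this] at hx₀norm; simp at hx₀norm
  set c := (x₀ : Fin p → ℝ) ⬝ᵥ A *ᵥ (x₀ : Fin p → ℝ) with hc
  have hcpos : 0 < c := hA.re_dotProduct_pos hx₀ne
  refine ⟨c, hcpos, fun x => ?_⟩
  by_cases hx : x = 0
  · simp [hx, dotProduct]
  · set y : E := (EuclideanSpace.equiv (Fin p) ℝ).symm x with hy
    have hyne : y ≠ 0 := by
      intro h; apply hx; ext i; exact congrFun (congrArg (EuclideanSpace.equiv (Fin p) ℝ) h) i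
    have hynorm : 0 < ‖y‖ := norm_pos_iff.mpr hyne
    set z : E := ‖y‖⁻¹ • y with hz
    have hzmem : z ∈ Metric.sphere (0:E) 1 := by
      simp [hz, norm_smul, abs_of_pos (inv_pos.mpr hynorm), inv_mul_cancel₀ hynorm.ne']
    have hkey := hx₀min hzmem
    have hyx : (y : Fin p → ℝ) = x := rfl
    have hzx : (z : Fin p → ℝ) = ‖y‖⁻¹ • x := by rw [hz, hy]; rfl
    have hquad : (z : Fin p → ℝ) ⬝ᵥ A *ᵥ (z : Fin p → ℝ)
        = ‖y‖⁻¹ ^ 2 * (x ⬝ᵥ A *ᵥ x) := by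
      rw [hzx, quad_eq_sum, quad_eq_sum, Finset.mul_sum]
      refine Finset.sum_congr rfl fun u _ => ?_
      rw [Finset.mul_sum]
      refine Finset.sum_congr rfl fun v _ => ?_
      simp [Pi.smul_apply, smul_eq_mul]; ring
    have hnormsq : ‖y‖ ^ 2 = ∑ i, x i ^ 2 := by
      rw [EuclideanSpace.norm_eq, Real.sq_sqrt (by positivity)]
      exact Finset.sum_congr rfl fun i _ => by rw [Real.norm_eq_abs, sq_abs]; rfl
    have : c ≤ ‖y‖⁻¹ ^ 2 * (x ⬝ᵥ A *ᵥ x) := by rw [← hquad]; exact hkey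
    calc c * ∑ i, x i ^ 2 = c * ‖y‖ ^ 2 := by rw [hnormsq]
      _ ≤ (‖y‖⁻¹ ^ 2 * (x ⬝ᵥ A *ᵥ x)) * ‖y‖ ^ 2 := by
          exact mul_le_mul_of_nonneg_right this (by positivity)
      _ = x ⬝ᵥ A *ᵥ x := by
          field_simp

lemma posdef_perturb {p : ℕ} {A M : Matrix (Fin p) (Fin p) ℝ}
    (hA : A.IsHermitian) (hM : M.IsHermitian) {c : ℝ}
    (hq : ∀ x : Fin p → ℝ, c * (∑ i, x i ^ 2) ≤ x ⬝ᵥ A *ᵥ x)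
    {ε : ℝ} (hε : 0 ≤ ε) (hlt : ε * frob M < c) : (A - ε • M).PosDef := by
  have hsm : (ε • M).IsHermitian := by
    unfold Matrix.IsHermitian at hM ⊢
    rw [Matrix.conjTranspose_smul, hM]; simp
  refine Matrix.PosDef.of_dotProduct_mulVec_pos (hA.sub hsm) fun x hx => ?_
  have hsum : 0 < ∑ i, x i ^ 2 := by
    obtain ⟨i, hi⟩ := Function.ne_iff.mp hx
    have hxi : 0 < x i ^ 2 := by
      have : x i ≠ 0 := hi
      positivity
    exact lt_of_lt_of_le hxi (Finset.single_le_sum (f := fun i => x i ^ 2)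
      (fun j _ => sq_nonneg _) (Finset.mem_univ i))
  have expand : x ⬝ᵥ (A - ε • M) *ᵥ x = x ⬝ᵥ A *ᵥ x - ε * (x ⬝ᵥ M *ᵥ x) := by
    rw [Matrix.sub_mulVec, dotProduct_sub, Matrix.smul_mulVec, dotProduct_smul,
      smul_eq_mul]
  have h1 : ε * (x ⬝ᵥ M *ᵥ x) ≤ ε * frob M * (∑ i, x i ^ 2) := by
    calc ε * (x ⬝ᵥ M *ᵥ x) ≤ ε * |x ⬝ᵥ M *ᵥ x| :=
          mul_le_mul_of_nonneg_left (le_abs_self _) hε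
      _ ≤ ε * (frob M * ∑ i, x i ^ 2) := mul_le_mul_of_nonneg_left (abs_quad_le M x) hε
      _ = ε * frob M * (∑ i, x i ^ 2) := by ring
  have h2 : 0 < x ⬝ᵥ (A - ε • M) *ᵥ x := by
    rw [expand]
    have := hq x
    nlinarith
  simpa using h2

lemma trace_transpose_mul {p : ℕ} (A B : Matrix (Fin p) (Fin p) ℝ) :
    (Aᵀ * B).trace = ∑ u, ∑ v, A u v * B u v := by
  rw [Matrix.trace]
  simp only [Matrix.diag_apply, Matrix.mul_apply, Matrix.transpose_apply]
  exact Finset.sum_comm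

lemma quad_term_eq {p : ℕ} (A S : Matrix (Fin p) (Fin p) ℝ) :
    (Aᵀ * A - Sᵀ * A - Aᵀ * S).trace
      = ∑ u, ∑ v, (A u v ^ 2 - S u v * A u v - A u v * S u v) := by
  rw [Matrix.trace_sub, Matrix.trace_sub, trace_transpose_mul, trace_transpose_mul,
    trace_transpose_mul]
  rw [← Finset.sum_sub_distrib, ← Finset.sum_sub_distrib]
  refine Finset.sum_congr rfl fun u _ => ?_
  rw [← Finset.sum_sub_distrib, ← Finset.sum_sub_distrib]
  exact Finset.sum_congr rfl fun v _ => by ring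

lemma offdiag_l1_le {p : ℕ} (M : Matrix (Fin p) (Fin p) ℝ) :
    ∑ u, ∑ v, (if u ≠ v then |M u v| else 0)
      ≤ Real.sqrt ((p : ℝ) * ((p : ℝ) - 1)) * frob M := by
  classical
  rcases Nat.eq_zero_or_pos p with hp | hp
  · subst hp; simp
  have hpp : (0:ℝ) ≤ (p : ℝ) * ((p : ℝ) - 1) := by
    have : (1:ℝ) ≤ (p:ℝ) := by exact_mod_cast hp
    nlinarith
  set f : Fin p × Fin p → ℝ := fun q => if q.1 ≠ q.2 then 1 else 0 with hf
  set g : Fin p × Fin p → ℝ := fun q => if q.1 ≠ q.2 then |M q.1 q.2| else 0 with hg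
  have hL : ∑ u, ∑ v, (if u ≠ v then |M u v| else 0) = ∑ q : Fin p × Fin p, f q * g q := by
    rw [Fintype.sum_prod_type]
    refine Finset.sum_congr rfl fun u _ => Finset.sum_congr rfl fun v _ => ?_
    by_cases h : u = v <;> simp [hf, hg, h]
  have hcs := sum_mul_sq_le_sq_mul_sq Finset.univ f g
  have hf2 : ∑ q : Fin p × Fin p, f q ^ 2 ≤ (p : ℝ) * ((p : ℝ) - 1) := by
    have h1 : ∑ q : Fin p × Fin p, f q ^ 2
        = ((Finset.univ.filter (fun q : Fin p × Fin p => q.1 ≠ q.2)).card : ℝ) := by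
      rw [← Finset.sum_boole]
      refine Finset.sum_congr rfl fun q _ => ?_
      by_cases h : q.1 = q.2 <;> simp [hf, h]
    have h2 : (Finset.univ.filter (fun q : Fin p × Fin p => q.1 ≠ q.2)).card
        = p * p - p := by
      have : Finset.univ.filter (fun q : Fin p × Fin p => q.1 ≠ q.2)
          = (Finset.univ : Finset (Fin p)).offDiag := by
        ext q; simp [Finset.mem_offDiag]
      rw [this, Finset.offDiag_card]
      simp
    rw [h1, h2]
    have hle : p ≤ p * p := Nat.le_mul_of_pos_left p hp
    rw [Nat.cast_sub hle]
    push_cast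
    nlinarith [sq_nonneg ((p:ℝ))]
  have hg2 : ∑ q : Fin p × Fin p, g q ^ 2 ≤ frob M ^ 2 := by
    rw [frob_sq, Fintype.sum_prod_type]
    refine Finset.sum_le_sum fun u _ => Finset.sum_le_sum fun v _ => ?_
    by_cases h : u = v <;> simp [hg, h, sq_abs, sq_nonneg]
  have hLnn : (0:ℝ) ≤ ∑ q : Fin p × Fin p, f q * g q := by
    refine Finset.sum_nonneg fun q _ => ?_
    by_cases h : q.1 = q.2 <;> simp [hf, hg, h, abs_nonneg]
  rw [hL]
  have := Real.sqrt_le_sqrt (hcs.trans (mul_le_mul hf2 hg2 (Finset.sum_nonneg fun q _ => sq_nonneg _) hpp))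
  rw [Real.sqrt_sq hLnn] at this
  refine this.trans ?_
  rw [Real.sqrt_mul hpp, Real.sqrt_sq (frob_nonneg M)]

section sup
variable {p : ℕ} (ξ1 : Fin p → Fin p → ℕ → ℝ) (s e : ℕ)

noncomputable def Fsup (r : ℕ) : ℝ := ⨆ u : Fin p, ⨆ v : Fin p, ⨆ _ : u ≠ v, ξ1 u v r

noncomputable def gsup (r : ℕ) : ℝ := ⨆ _ : r ∈ Finset.Icc s e, Fsup ξ1 r

lemma gsup_eq (r : ℕ) : gsup ξ1 s e r = if r ∈ Finset.Icc s e then Fsup ξ1 r else 0 := by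
  by_cases h : r ∈ Finset.Icc s e
  · rw [gsup, ciSup_pos h, if_pos h]
  · rw [gsup, ciSup_neg h, if_neg h, Real.sSup_empty]

lemma bdd_gsup : BddAbove (Set.range (gsup ξ1 s e)) := by
  have hsub : Set.range (gsup ξ1 s e) ⊆
      insert 0 ((fun r => Fsup ξ1 r) '' ↑(Finset.Icc s e)) := by
    rintro x ⟨r, rfl⟩
    rw [gsup_eq]
    by_cases h : r ∈ Finset.Icc s e
    · rw [if_pos h]; exact Set.mem_insert_of_mem _ ⟨r, h, rfl⟩
    · rw [if_neg h]; exact Set.mem_insert _ _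
  exact (((Finset.Icc s e).finite_toSet.image _).insert 0).bddAbove.mono hsub

lemma Xi_eq : (⨆ r ∈ Finset.Icc s e, ⨆ u : Fin p, ⨆ v : Fin p, ⨆ _ : u ≠ v, ξ1 u v r)
    = ⨆ r, gsup ξ1 s e r := rfl

lemma Fsup_nonneg (hp : 1 ≤ p) (r : ℕ) : 0 ≤ Fsup ξ1 r := by
  have u0 : Fin p := ⟨0, hp⟩
  have h1 : (0:ℝ) = ⨆ _ : u0 ≠ u0, ξ1 u0 u0 r := by
    rw [ciSup_neg (by simp), Real.sSup_empty]
  have h2 : (⨆ _ : u0 ≠ u0, ξ1 u0 u0 r) ≤ ⨆ v, ⨆ _ : u0 ≠ v, ξ1 u0 v r :=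
    le_ciSup (f := fun v => ⨆ _ : u0 ≠ v, ξ1 u0 v r)
      (Set.Finite.bddAbove (Set.finite_range _)) u0
  have h3 : (⨆ v, ⨆ _ : u0 ≠ v, ξ1 u0 v r) ≤ Fsup ξ1 r :=
    le_ciSup (f := fun u => ⨆ v, ⨆ _ : u ≠ v, ξ1 u v r)
      (Set.Finite.bddAbove (Set.finite_range _)) u0
  rw [h1]; exact h2.trans h3

lemma Xi_nonneg (_hp : 1 ≤ p) (hs : 1 ≤ s) :
    0 ≤ ⨆ r ∈ Finset.Icc s e, ⨆ u : Fin p, ⨆ v : Fin p, ⨆ _ : u ≠ v, ξ1 u v r := by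
  rw [Xi_eq]
  have h0 : gsup ξ1 s e 0 = 0 := by
    rw [gsup_eq, if_neg (by simp [Finset.mem_Icc]; omega)]
  calc (0:ℝ) = gsup ξ1 s e 0 := h0.symm
    _ ≤ ⨆ r, gsup ξ1 s e r := le_ciSup (bdd_gsup ξ1 s e) 0

lemma xi_le_Xi {r : ℕ} (hr : r ∈ Finset.Icc s e) {u v : Fin p} (huv : u ≠ v) :
    ξ1 u v r ≤ ⨆ r ∈ Finset.Icc s e, ⨆ u : Fin p, ⨆ v : Fin p, ⨆ _ : u ≠ v, ξ1 u v r := by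
  rw [Xi_eq]
  have h1 : ξ1 u v r = ⨆ _ : u ≠ v, ξ1 u v r :=
    (ciSup_pos (f := fun _ => ξ1 u v r) huv).symm
  have h2 : (⨆ _ : u ≠ v, ξ1 u v r) ≤ ⨆ v', ⨆ _ : u ≠ v', ξ1 u v' r :=
    le_ciSup (f := fun v' => ⨆ _ : u ≠ v', ξ1 u v' r)
      (Set.Finite.bddAbove (Set.finite_range _)) v
  have h3 : (⨆ v', ⨆ _ : u ≠ v', ξ1 u v' r) ≤ Fsup ξ1 r :=
    le_ciSup (f := fun u => ⨆ v', ⨆ _ : u ≠ v', ξ1 u v' r)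
      (Set.Finite.bddAbove (Set.finite_range _)) u
  have h4 : Fsup ξ1 r = gsup ξ1 s e r := by rw [gsup_eq, if_pos hr]
  have h5 : gsup ξ1 s e r ≤ ⨆ r', gsup ξ1 s e r' := le_ciSup (bdd_gsup ξ1 s e) r
  rw [h1]
  exact (h2.trans h3).trans (h4 ▸ h5)

end sup

lemma frob_sub_le' {p : ℕ} (A B : Matrix (Fin p) (Fin p) ℝ) :
    frob (A - B) ≤ frob A + frob B := by
  rw [frob_eq_norm, frob_eq_norm, frob_eq_norm, toE_sub]
  exact norm_sub_le _ _

lemma frob_add_le {p : ℕ} (A B : Matrix (Fin p) (Fin p) ℝ) :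
    frob (A + B) ≤ frob A + frob B := by
  rw [frob_eq_norm, frob_eq_norm, frob_eq_norm, toE_add]
  exact norm_add_le _ _

/-- for any minimizer of the adaptive GFlsL objective over positive definite
tuples, the normalized partial residual sums obey the stated bound. -/
theorem stmt7 (p T : ℕ) (hp : 1 ≤ p) (hT : 1 ≤ T)
    (X : ℕ → Fin p → ℝ) (lam1 lam2 : ℝ) (hlam1 : 0 ≤ lam1) (hlam2 : 0 < lam2)
    (ξ1 : Fin p → Fin p → ℕ → ℝ)
    (hξ1 : ∀ u v : Fin p, u ≠ v → ∀ t ∈ Finset.Icc 1 T, 0 ≤ ξ1 u v t)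
    (ξ2 : ℕ → ℝ) (hξ2 : ∀ t ∈ Finset.Icc 2 T, 0 ≤ ξ2 t) (hξ21 : ξ2 1 = 0)
    (hξ2T1 : ξ2 (T + 1) = 0)
    (Θhat : ℕ → Matrix (Fin p) (Fin p) ℝ)
    (hPD : ∀ t ∈ Finset.Icc 1 T, (Θhat t).PosDef)
    (hmin : ∀ Θ : ℕ → Matrix (Fin p) (Fin p) ℝ,
      (∀ t ∈ Finset.Icc 1 T, (Θ t).PosDef) →
      gflslA p T X lam1 lam2 ξ1 ξ2 Θhat ≤ gflslA p T X lam1 lam2 ξ1 ξ2 Θ) :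
    ∀ s t : ℕ, 1 ≤ s → s < t → t ≤ T + 1 →
      frob ((1 / (T : ℝ)) • ∑ r ∈ Finset.Icc s (t - 1),
          (Θhat r - Matrix.vecMulVec (X r) (X r)))
        ≤ lam2 * (ξ2 s + ξ2 t)
          + lam1 * Real.sqrt ((p : ℝ) * ((p : ℝ) - 1)) * ((t : ℝ) - (s : ℝ)) *
            (⨆ r ∈ Finset.Icc s (t - 1), ⨆ u : Fin p, ⨆ v : Fin p,
              ⨆ _ : u ≠ v, ξ1 u v r) := by
  classical
  intro s t hs hst htT
  set τ : ℝ := (T : ℝ) with hτdef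
  have hτ : (0:ℝ) < τ := by
    rw [hτdef]
    exact_mod_cast Nat.lt_of_lt_of_le Nat.zero_lt_one hT
  set I := Finset.Icc s (t - 1) with hIdef
  have hsub : I ⊆ Finset.Icc 1 T := by
    intro r hr
    rw [hIdef, Finset.mem_Icc] at hr
    rw [Finset.mem_Icc]
    omega
  set S : ℕ → Matrix (Fin p) (Fin p) ℝ := fun r => Matrix.vecMulVec (X r) (X r) with hSdef
  set M : Matrix (Fin p) (Fin p) ℝ := ∑ r ∈ I, (Θhat r - S r) with hMdef
  set Ξ : ℝ := ⨆ r ∈ I, ⨆ u : Fin p, ⨆ v : Fin p, ⨆ _ : u ≠ v, ξ1 u v r with hΞdef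
  set F : ℝ := frob M with hFdef
  set n : ℕ := t - s with hndef
  have hn1 : 1 ≤ n := by omega
  have hN : ((t : ℝ) - (s : ℝ)) = (n : ℝ) := by
    rw [hndef, Nat.cast_sub hst.le]
  set B : ℝ := lam2 * (ξ2 s + ξ2 t)
      + lam1 * Real.sqrt ((p : ℝ) * ((p : ℝ) - 1)) * ((t : ℝ) - (s : ℝ)) * Ξ with hBdef
  -- basic nonnegativity facts
  have hΞ0 : 0 ≤ Ξ := Xi_nonneg ξ1 s (t-1) hp hs
  have hξ2s : 0 ≤ ξ2 s := by
    rcases eq_or_lt_of_le hs with h | h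
    · rw [← h, hξ21]
    · exact hξ2 s (by rw [Finset.mem_Icc]; omega)
  have hξ2t : 0 ≤ ξ2 t := by
    rcases eq_or_lt_of_le htT with h | h
    · rw [h, hξ2T1]
    · exact hξ2 t (by rw [Finset.mem_Icc]; omega)
  have hsqrt0 : 0 ≤ Real.sqrt ((p : ℝ) * ((p : ℝ) - 1)) := Real.sqrt_nonneg _
  have hts0 : (0:ℝ) ≤ (t : ℝ) - (s : ℝ) := by
    rw [hN]; positivity
  have hB0 : 0 ≤ B := by
    rw [hBdef]
    have h1 : 0 ≤ lam2 * (ξ2 s + ξ2 t) := by positivity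
    have h2 : 0 ≤ lam1 * Real.sqrt ((p : ℝ) * ((p : ℝ) - 1)) * ((t : ℝ) - (s : ℝ)) * Ξ := by
      apply mul_nonneg
      apply mul_nonneg
      apply mul_nonneg hlam1 hsqrt0
      exact hts0
      exact hΞ0
    linarith
  -- LHS simplification
  have hLHS : frob ((1 / τ) • M) = F / τ := by
    rw [frob_smul, abs_of_pos (by positivity : (0:ℝ) < 1/τ), ← hFdef]
    ring
  rw [hLHS]
  show F / τ ≤ B
  by_cases hM0 : M = 0
  · rw [hFdef, hM0, (frob_eq_zero_iff (0 : Matrix (Fin p) (Fin p) ℝ)).mpr rfl]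
    simpa using hB0
  have hF : 0 < F := by
    rcases lt_or_eq_of_le (frob_nonneg M) with h | h
    · exact h
    · exact absurd ((frob_eq_zero_iff M).mp h.symm) hM0
  -- symmetry of M
  have hMherm : M.IsHermitian := by
    show Mᴴ = M
    ext i j
    rw [Matrix.conjTranspose_apply, hMdef, Matrix.sum_apply, Matrix.sum_apply]
    rw [star_trivial]
    refine Finset.sum_congr rfl fun r hr => ?_
    have hherm := (hPD r (hsub hr)).1
    have h1 : Θhat r j i = Θhat r i j := by
      have := congrFun (congrFun hherm i) j
      rw [Matrix.conjTranspose_apply, star_trivial] at this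
      exact this
    simp only [Matrix.sub_apply, hSdef, Matrix.vecMulVec_apply, h1]
    ring
  -- positive-definiteness margin
  have hcs : ∀ r ∈ I, ∃ c, 0 < c ∧ ∀ x : Fin p → ℝ, c * (∑ i, x i ^ 2) ≤ x ⬝ᵥ (Θhat r) *ᵥ x := by
    intro r hr
    obtain ⟨c, hc, h⟩ := posdef_quad_lower hp (Θhat r) (hPD r (hsub hr))
    exact ⟨c, hc, h⟩
  choose! c hc1 hc2 using hcs
  have hIne : I.Nonempty := ⟨s, by rw [hIdef, Finset.mem_Icc]; omega⟩
  set cmin : ℝ := I.inf' hIne c with hcmin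
  have hcmin0 : 0 < cmin := by
    rw [hcmin, Finset.lt_inf'_iff]
    exact fun r hr => hc1 r hr
  set ε₀ : ℝ := cmin / F with hε₀def
  have hε₀ : 0 < ε₀ := by positivity
  have hcardI : I.card = n := by
    rw [hIdef, Nat.card_Icc]
    omega
  -- the key inequality, for every small ε
  have claim : ∀ ε : ℝ, 0 < ε → ε < ε₀ → F / τ ≤ (n:ℝ) * ε * F / (2 * τ) + B := by
    intro ε hε hεε₀
    set Θ' : ℕ → Matrix (Fin p) (Fin p) ℝ :=
      fun r => if r ∈ I then Θhat r - ε • M else Θhat r with hΘ'def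
    have hΘ'in : ∀ r ∈ I, Θ' r = Θhat r - ε • M := fun r hr => if_pos hr
    have hΘ'out : ∀ r, r ∉ I → Θ' r = Θhat r := fun r hr => if_neg hr
    have hPD' : ∀ r ∈ Finset.Icc 1 T, (Θ' r).PosDef := by
      intro r hr
      by_cases hrI : r ∈ I
      · rw [hΘ'in r hrI]
        refine posdef_perturb (hPD r hr).1 hMherm (hc2 r hrI) hε.le ?_
        have h1 : ε * F < ε₀ * F := by
          exact mul_lt_mul_of_pos_right hεε₀ hF
        have h2 : ε₀ * F = cmin := by
          rw [hε₀def]; field_simp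
        have h3 : cmin ≤ c r := Finset.inf'_le c hrI
        rw [← hFdef]
        linarith
      · rw [hΘ'out r hrI]; exact hPD r hr
    have hineq := hmin Θ' hPD'
    -- quadratic part difference (an equality)
    have hQ : (∑ r ∈ Finset.Icc 1 T,
          ((Θ' r)ᵀ * Θ' r - (S r)ᵀ * Θ' r - (Θ' r)ᵀ * (S r)).trace)
        - (∑ r ∈ Finset.Icc 1 T,
          ((Θhat r)ᵀ * Θhat r - (S r)ᵀ * Θhat r - (Θhat r)ᵀ * (S r)).trace)
        = -2 * ε * F^2 + (n:ℝ) * ε^2 * F^2 := by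
      rw [← Finset.sum_sub_distrib]
      have hstep : ∀ r ∈ Finset.Icc 1 T,
          ((Θ' r)ᵀ * Θ' r - (S r)ᵀ * Θ' r - (Θ' r)ᵀ * (S r)).trace
            - ((Θhat r)ᵀ * Θhat r - (S r)ᵀ * Θhat r - (Θhat r)ᵀ * (S r)).trace
          = if r ∈ I then
              (-2*ε*(∑ u, ∑ v, (Θhat r - S r) u v * M u v)
                + ε^2 * (∑ u, ∑ v, (M u v)^2)) else 0 := by
        intro r hr
        by_cases hrI : r ∈ I
        · rw [if_pos hrI, hΘ'in r hrI, quad_term_eq, quad_term_eq,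
            ← Finset.sum_sub_distrib, Finset.mul_sum, Finset.mul_sum,
            ← Finset.sum_add_distrib]
          refine Finset.sum_congr rfl fun u _ => ?_
          rw [← Finset.sum_sub_distrib, Finset.mul_sum, Finset.mul_sum,
            ← Finset.sum_add_distrib]
          refine Finset.sum_congr rfl fun v _ => ?_
          simp only [Matrix.sub_apply, Matrix.smul_apply, smul_eq_mul]
          ring
        · rw [if_neg hrI, hΘ'out r hrI, sub_self]
      rw [Finset.sum_congr rfl hstep, Finset.sum_ite_mem,
        Finset.inter_eq_right.mpr hsub, Finset.sum_add_distrib, ← Finset.mul_sum,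
        Finset.sum_const, hcardI]
      have hBsum : ∑ r ∈ I, ∑ u, ∑ v, (Θhat r - S r) u v * M u v
          = ∑ u, ∑ v, M u v * M u v := by
        rw [Finset.sum_comm]
        refine Finset.sum_congr rfl fun u _ => ?_
        rw [Finset.sum_comm]
        refine Finset.sum_congr rfl fun v _ => ?_
        rw [← Finset.sum_mul]
        congr 1
        rw [hMdef, Matrix.sum_apply]
      rw [hBsum]
      have hF2 : ∑ u, ∑ v, (M u v)^2 = F^2 := by rw [hFdef, frob_sq]
      have hF2' : ∑ u, ∑ v, M u v * M u v = F^2 := by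
        rw [← hF2]
        exact Finset.sum_congr rfl fun u _ => Finset.sum_congr rfl fun v _ => (sq (M u v)).symm ▸ by ring
      rw [hF2']
      rw [nsmul_eq_mul]
      rw [hF2]
      ring
    -- lasso part difference
    have hL : (∑ r ∈ Finset.Icc 1 T, ∑ u, ∑ v,
          (if u ≠ v then ξ1 u v r * |Θ' r u v| else 0))
        - (∑ r ∈ Finset.Icc 1 T, ∑ u, ∑ v,
          (if u ≠ v then ξ1 u v r * |Θhat r u v| else 0))
        ≤ (n:ℝ) * (ε * Ξ * (Real.sqrt ((p : ℝ) * ((p : ℝ) - 1)) * F)) := by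
      set OffL : ℝ := ∑ u, ∑ v, (if u ≠ v then |M u v| else 0) with hOffL
      have hOffL0 : 0 ≤ OffL := by
        rw [hOffL]
        refine Finset.sum_nonneg fun u _ => Finset.sum_nonneg fun v _ => ?_
        by_cases h : u ≠ v <;> simp [h, abs_nonneg]
      rw [← Finset.sum_sub_distrib]
      have hstep : ∀ r ∈ Finset.Icc 1 T,
          ((∑ u, ∑ v, (if u ≠ v then ξ1 u v r * |Θ' r u v| else 0))
            - (∑ u, ∑ v, (if u ≠ v then ξ1 u v r * |Θhat r u v| else 0)))
          ≤ if r ∈ I then ε * Ξ * OffL else 0 := by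
        intro r hr
        by_cases hrI : r ∈ I
        · rw [if_pos hrI, hΘ'in r hrI]
          have hRHS : ε * Ξ * OffL
              = ∑ u, ∑ v, (if u ≠ v then ε * Ξ * |M u v| else 0) := by
            rw [hOffL, Finset.mul_sum]
            refine Finset.sum_congr rfl fun u _ => ?_
            rw [Finset.mul_sum]
            refine Finset.sum_congr rfl fun v _ => ?_
            by_cases h : u ≠ v <;> simp [h]
          rw [hRHS, ← Finset.sum_sub_distrib]
          refine Finset.sum_le_sum fun u _ => ?_
          rw [← Finset.sum_sub_distrib]
          refine Finset.sum_le_sum fun v _ => ?_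
          by_cases huv : u ≠ v
          · rw [if_pos huv, if_pos huv, if_pos huv]
            have hξnn : 0 ≤ ξ1 u v r := hξ1 u v huv r hr
            have hξΞ : ξ1 u v r ≤ Ξ := by
              rw [hΞdef]
              exact xi_le_Xi ξ1 s (t-1) (by rw [hIdef] at hrI; exact hrI) huv
            have habs : |(Θhat r - ε • M) u v| - |Θhat r u v| ≤ ε * |M u v| := by
              have h1 := abs_sub_abs_le_abs_sub ((Θhat r - ε • M) u v) (Θhat r u v)
              have h2 : (Θhat r - ε • M) u v - Θhat r u v = -(ε * M u v) := by
                simp [Matrix.sub_apply, Matrix.smul_apply, smul_eq_mul]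
              rw [h2, abs_neg, abs_mul, abs_of_pos hε] at h1
              exact h1
            calc ξ1 u v r * |(Θhat r - ε • M) u v| - ξ1 u v r * |Θhat r u v|
                = ξ1 u v r * (|(Θhat r - ε • M) u v| - |Θhat r u v|) := by ring
              _ ≤ ξ1 u v r * (ε * |M u v|) := mul_le_mul_of_nonneg_left habs hξnn
              _ ≤ Ξ * (ε * |M u v|) := mul_le_mul_of_nonneg_right hξΞ (by positivity)
              _ = ε * Ξ * |M u v| := by ring
          · rw [if_neg huv, if_neg huv, if_neg huv, sub_self]
        · rw [if_neg hrI, hΘ'out r hrI, sub_self]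
      refine (Finset.sum_le_sum hstep).trans ?_
      rw [Finset.sum_ite_mem, Finset.inter_eq_right.mpr hsub, Finset.sum_const, hcardI,
        nsmul_eq_mul]
      have hOffLle : OffL ≤ Real.sqrt ((p : ℝ) * ((p : ℝ) - 1)) * F := by
        rw [hOffL, hFdef]
        exact offdiag_l1_le M
      have hεΞ : 0 ≤ ε * Ξ := by positivity
      have : ε * Ξ * OffL ≤ ε * Ξ * (Real.sqrt ((p : ℝ) * ((p : ℝ) - 1)) * F) :=
        mul_le_mul_of_nonneg_left hOffLle hεΞ
      have hn0 : (0:ℝ) ≤ (n:ℝ) := by positivity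
      exact mul_le_mul_of_nonneg_left this hn0
    -- fused part difference
    have hFu : (∑ r ∈ Finset.Icc 2 T, ξ2 r * frob (Θ' r - Θ' (r - 1)))
        - (∑ r ∈ Finset.Icc 2 T, ξ2 r * frob (Θhat r - Θhat (r - 1)))
        ≤ ε * F * (ξ2 s + ξ2 t) := by
      rw [← Finset.sum_sub_distrib]
      have hterm : ∀ r ∈ Finset.Icc 2 T,
          ξ2 r * frob (Θ' r - Θ' (r-1)) - ξ2 r * frob (Θhat r - Θhat (r-1))
          ≤ (if r = s then ε * F * ξ2 s else 0) + (if r = t then ε * F * ξ2 t else 0) := by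
        intro r hr
        rw [Finset.mem_Icc] at hr
        have hξ2r : 0 ≤ ξ2 r := hξ2 r (Finset.mem_Icc.mpr hr)
        by_cases hrs : r = s
        · have hrt : ¬ (r = t) := by omega
          rw [if_pos hrs, if_neg hrt, add_zero]
          have hrI : r ∈ I := by rw [hIdef, Finset.mem_Icc]; omega
          have hr1I : r - 1 ∉ I := by rw [hIdef, Finset.mem_Icc]; omega
          rw [hΘ'in r hrI, hΘ'out _ hr1I]
          have hmat : Θhat r - ε • M - Θhat (r-1) = (Θhat r - Θhat (r-1)) - ε • M := by
            abel
          rw [hmat]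
          have hfr := frob_sub_le' (Θhat r - Θhat (r-1)) (ε • M)
          rw [frob_smul, abs_of_pos hε, ← hFdef] at hfr
          have h2 := mul_le_mul_of_nonneg_left hfr hξ2r
          rw [mul_add] at h2
          rw [hrs] at hξ2r h2 ⊢
          linarith
        · by_cases hrt : r = t
          · rw [if_neg hrs, if_pos hrt, zero_add, ← hrt]
            have hrI : r ∉ I := by rw [hIdef, Finset.mem_Icc]; omega
            have hr1I : r - 1 ∈ I := by rw [hIdef, Finset.mem_Icc]; omega
            rw [hΘ'out r hrI, hΘ'in _ hr1I]
            have hmat : Θhat r - (Θhat (r-1) - ε • M) = (Θhat r - Θhat (r-1)) + ε • M := by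
              abel
            rw [hmat]
            have hfr := frob_add_le (Θhat r - Θhat (r-1)) (ε • M)
            rw [frob_smul, abs_of_pos hε, ← hFdef] at hfr
            have h2 := mul_le_mul_of_nonneg_left hfr hξ2r
            rw [mul_add] at h2
            linarith
          · rw [if_neg hrs, if_neg hrt, add_zero]
            have hiff : (r ∈ I) ↔ (r - 1 ∈ I) := by
              rw [hIdef, Finset.mem_Icc, Finset.mem_Icc]
              omega
            by_cases hrI : r ∈ I
            · rw [hΘ'in r hrI, hΘ'in _ (hiff.mp hrI)]
              have hcc : Θhat r - ε • M - (Θhat (r-1) - ε • M) = Θhat r - Θhat (r-1) :=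
                sub_sub_sub_cancel_right _ _ _
              rw [hcc, sub_self]
            · rw [hΘ'out r hrI, hΘ'out _ (fun h => hrI (hiff.mpr h)), sub_self]
      refine (Finset.sum_le_sum hterm).trans ?_
      rw [Finset.sum_add_distrib, Finset.sum_ite_eq' (Finset.Icc 2 T) s
        (fun _ => ε * F * ξ2 s), Finset.sum_ite_eq' (Finset.Icc 2 T) t
        (fun _ => ε * F * ξ2 t)]
      have hss : (if s ∈ Finset.Icc 2 T then ε * F * ξ2 s else 0) = ε * F * ξ2 s := by
        by_cases h : s ∈ Finset.Icc 2 T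
        · rw [if_pos h]
        · rw [if_neg h]
          rw [Finset.mem_Icc] at h
          have hs1 : s = 1 := by omega
          rw [hs1, hξ21]
          ring
      have htt : (if t ∈ Finset.Icc 2 T then ε * F * ξ2 t else 0) = ε * F * ξ2 t := by
        by_cases h : t ∈ Finset.Icc 2 T
        · rw [if_pos h]
        · rw [if_neg h]
          rw [Finset.mem_Icc] at h
          have ht1 : t = T + 1 := by omega
          rw [ht1, hξ2T1]
          ring
      rw [hss, htt]
      ring_nf
      exact le_refl _
    -- combine
    have hsplit : gflslA p T X lam1 lam2 ξ1 ξ2 Θ' - gflslA p T X lam1 lam2 ξ1 ξ2 Θhat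
        = (1 / (2*τ)) * ((∑ r ∈ Finset.Icc 1 T,
              ((Θ' r)ᵀ * Θ' r - (S r)ᵀ * Θ' r - (Θ' r)ᵀ * (S r)).trace)
            - (∑ r ∈ Finset.Icc 1 T,
              ((Θhat r)ᵀ * Θhat r - (S r)ᵀ * Θhat r - (Θhat r)ᵀ * (S r)).trace))
          + lam1 * ((∑ r ∈ Finset.Icc 1 T, ∑ u, ∑ v,
              (if u ≠ v then ξ1 u v r * |Θ' r u v| else 0))
            - (∑ r ∈ Finset.Icc 1 T, ∑ u, ∑ v,
              (if u ≠ v then ξ1 u v r * |Θhat r u v| else 0)))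
          + lam2 * ((∑ r ∈ Finset.Icc 2 T, ξ2 r * frob (Θ' r - Θ' (r - 1)))
            - (∑ r ∈ Finset.Icc 2 T, ξ2 r * frob (Θhat r - Θhat (r - 1)))) := by
      rw [gflslA, gflslA, ← hτdef]
      simp only [hSdef]
      ring
    have h0 := sub_nonneg.mpr hineq
    rw [hsplit, hQ] at h0
    have e1 := mul_le_mul_of_nonneg_left hL hlam1
    have e2 := mul_le_mul_of_nonneg_left hFu hlam2.le
    have hcomb : 0 ≤ (1 / (2*τ)) * (-2 * ε * F^2 + (n:ℝ) * ε^2 * F^2)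
        + lam1 * ((n:ℝ) * (ε * Ξ * (Real.sqrt ((p : ℝ) * ((p : ℝ) - 1)) * F)))
        + lam2 * (ε * F * (ξ2 s + ξ2 t)) := by
      linarith
    have hεF : 0 < ε * F := mul_pos hε hF
    have hkey : (ε * F) * (F / τ) ≤ (ε * F) * ((n:ℝ) * ε * F / (2 * τ) + B) := by
      have hid : (ε * F) * ((n:ℝ) * ε * F / (2 * τ) + B) - (ε * F) * (F / τ)
          = (1 / (2*τ)) * (-2 * ε * F^2 + (n:ℝ) * ε^2 * F^2)
            + lam1 * ((n:ℝ) * (ε * Ξ * (Real.sqrt ((p : ℝ) * ((p : ℝ) - 1)) * F)))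
            + lam2 * (ε * F * (ξ2 s + ξ2 t)) := by
        rw [hBdef, hN]
        field_simp
        ring
      linarith [hcomb, hid]
    exact le_of_mul_le_mul_left hkey hεF
  -- conclude by contradiction
  by_contra hcon
  push_neg at hcon
  set δ : ℝ := F / τ - B with hδ
  have hδ0 : 0 < δ := by rw [hδ]; linarith
  set ε : ℝ := min (ε₀ / 2) (δ * τ / ((n:ℝ) * F)) with hε
  have hnF : (0:ℝ) < (n:ℝ) * F := by
    have : (0:ℝ) < (n:ℝ) := by exact_mod_cast hn1
    positivity
  have hε1 : 0 < ε := by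
    rw [hε]
    apply lt_min (by linarith)
    positivity
  have hε2 : ε < ε₀ := by
    rw [hε]
    calc min (ε₀ / 2) (δ * τ / ((n:ℝ) * F)) ≤ ε₀ / 2 := min_le_left _ _
      _ < ε₀ := by linarith
  have := claim ε hε1 hε2
  have hεle : ε ≤ δ * τ / ((n:ℝ) * F) := min_le_right _ _
  have hbound : (n:ℝ) * ε * F / (2 * τ) ≤ δ / 2 := by
    rw [div_le_div_iff₀ (by linarith : (0:ℝ) < 2 * τ) (by norm_num : (0:ℝ) < 2)]
    show (n:ℝ) * ε * F * 2 ≤ δ * (2 * τ)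
    have h1 : (n:ℝ) * ε * F ≤ (n:ℝ) * (δ * τ / ((n:ℝ) * F)) * F := by
      have := mul_le_mul_of_nonneg_right
        (mul_le_mul_of_nonneg_left hεle (by positivity : (0:ℝ) ≤ (n:ℝ))) hF.le
      linarith
    have h2 : (n:ℝ) * (δ * τ / ((n:ℝ) * F)) * F = δ * τ := by
      field_simp
    have h3 : (n:ℝ) * ε * F ≤ δ * τ := le_of_le_of_eq h1 h2
    linarith
  rw [hδ] at hbound
  linarith
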